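/- arXiv:2511.22514 — 3 statements merged into one kernel-verified Lean document; each statement's English description precedes it below -/
import Mathlib

section
/- For a word w over the ordered alphabet {1,...,n} and for 1 ≤ p ≤ q ≤ n, let w_{p,q} denote the maximum length of a weakly increasing subsequence of w all of whose letters lie in the interval [p,q]. Then for any two words u, v over {1,...,n}, (uv)_{p,q} = max over p ≤ r ≤ q of (u_{p,r} + v_{r,q}). -/
/-- The maximum length of a weakly increasing subsequence of `w` all of whose
letters lie in the interval `[p, q]`. -/
def wis (w : List ℕ) (p q : ℕ) : ℕ :=
  ((w.sublists.filter (fun s => decide (s.Pairwise (· ≤ ·) ∧ ∀ a ∈ s, p ≤ a ∧ a ≤ q))).map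
    List.length).foldr max 0

lemma mem_le_foldr_max {l : List ℕ} {c x : ℕ} (hx : x ∈ l) : x ≤ l.foldr max c := by
  induction l with
  | nil => cases hx
  | cons a t ih =>
    rcases List.mem_cons.1 hx with rfl | h
    · exact le_max_left _ _
    · exact le_trans (ih h) (le_max_right _ _)

lemma init_le_foldr_max (l : List ℕ) (c : ℕ) : c ≤ l.foldr max c := by
  induction l with
  | nil => simp
  | cons a t ih => exact le_trans ih (le_max_right _ _)

lemma foldr_max_le {l : List ℕ} {c m : ℕ} (h : ∀ a ∈ l, a ≤ m) (hc : c ≤ m) :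
    l.foldr max c ≤ m := by
  induction l with
  | nil => simpa
  | cons a t ih =>
    exact max_le (h a List.mem_cons_self) (ih fun b hb => h b (List.mem_cons_of_mem _ hb))

lemma foldr_max_mem (l : List ℕ) (c : ℕ) : l.foldr max c ∈ l ∨ l.foldr max c = c := by
  induction l with
  | nil => simp
  | cons a t ih =>
    rcases le_total a (t.foldr max c) with h | h
    · rw [List.foldr_cons, max_eq_right h]
      rcases ih with h' | h'
      · exact Or.inl (List.mem_cons_of_mem _ h')
      · exact Or.inr h'
    · rw [List.foldr_cons, max_eq_left h]
      exact Or.inl List.mem_cons_self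

lemma le_wis {w s : List ℕ} {p q : ℕ} (hsub : s.Sublist w) (hsort : s.Pairwise (· ≤ ·))
    (hb : ∀ a ∈ s, p ≤ a ∧ a ≤ q) : s.length ≤ wis w p q := by
  apply mem_le_foldr_max
  simp only [List.mem_map, List.mem_filter, List.mem_sublists]
  exact ⟨s, ⟨hsub, by simp only [decide_eq_true_eq]; exact ⟨hsort, hb⟩⟩, rfl⟩

lemma wis_spec (w : List ℕ) (p q : ℕ) :
    ∃ s : List ℕ, s.Sublist w ∧ s.Pairwise (· ≤ ·) ∧ (∀ a ∈ s, p ≤ a ∧ a ≤ q) ∧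
      s.length = wis w p q := by
  have h := foldr_max_mem ((w.sublists.filter
      (fun s => decide (s.Pairwise (· ≤ ·) ∧ ∀ a ∈ s, p ≤ a ∧ a ≤ q))).map List.length) 0
  rcases h with h | h
  · simp only [List.mem_map, List.mem_filter, List.mem_sublists, decide_eq_true_eq] at h
    obtain ⟨s, ⟨hsub, hsort, hb⟩, hlen⟩ := h
    exact ⟨s, hsub, hsort, hb, hlen⟩
  · exact ⟨[], List.nil_sublist _, List.Pairwise.nil, by simp, h.symm⟩

theorem stmt0 (n : ℕ) (u v : List ℕ)
    (hu : ∀ a ∈ u, 1 ≤ a ∧ a ≤ n) (hv : ∀ a ∈ v, 1 ≤ a ∧ a ≤ n)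
    (p q : ℕ) (hp : 1 ≤ p) (hpq : p ≤ q) (hq : q ≤ n) :
    wis (u ++ v) p q = (Finset.Icc p q).sup (fun r => wis u p r + wis v r q) := by
  apply le_antisymm
  · -- wis (u++v) ≤ sup
    obtain ⟨s, hsub, hsort, hb, hlen⟩ := wis_spec (u ++ v) p q
    obtain ⟨s₁, s₂, rfl, hs₁, hs₂⟩ := List.sublist_append_iff.1 hsub
    obtain ⟨hsort₁, hsort₂, hcross⟩ := List.pairwise_append.1 hsort
    set r := s₁.foldr max p with hr
    have hpr : p ≤ r := init_le_foldr_max _ _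
    have hrq : r ≤ q := foldr_max_le (fun a ha => (hb a (List.mem_append_left _ ha)).2) hpq
    have h₁ : s₁.length ≤ wis u p r := by
      refine le_wis hs₁ hsort₁ fun a ha => ⟨(hb a (List.mem_append_left _ ha)).1,
        mem_le_foldr_max ha⟩
    have h₂ : s₂.length ≤ wis v r q := by
      refine le_wis hs₂ hsort₂ fun b hb' => ⟨?_, (hb b (List.mem_append_right _ hb')).2⟩
      exact foldr_max_le (fun a ha => hcross a ha b hb')
        (hb b (List.mem_append_right _ hb')).1
    calc wis (u ++ v) p q = s₁.length + s₂.length := by rw [← hlen, List.length_append]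
      _ ≤ wis u p r + wis v r q := Nat.add_le_add h₁ h₂
      _ ≤ _ := Finset.le_sup (f := fun r => wis u p r + wis v r q) (Finset.mem_Icc.2 ⟨hpr, hrq⟩)
  · -- sup ≤ wis (u++v)
    apply Finset.sup_le
    intro r hr
    rw [Finset.mem_Icc] at hr
    obtain ⟨s, hsub₁, hsort₁, hb₁, hlen₁⟩ := wis_spec u p r
    obtain ⟨t, hsub₂, hsort₂, hb₂, hlen₂⟩ := wis_spec v r q
    have : (s ++ t).length ≤ wis (u ++ v) p q := by
      refine le_wis (List.Sublist.append hsub₁ hsub₂) ?_ ?_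
      · exact List.pairwise_append.2
          ⟨hsort₁, hsort₂, fun a ha b hb => le_trans (hb₁ a ha).2 (hb₂ b hb).1⟩
      · intro a ha
        rcases List.mem_append.1 ha with h | h
        · exact ⟨(hb₁ a h).1, le_trans (hb₁ a h).2 hr.2⟩
        · exact ⟨le_trans hr.1 (hb₂ a h).1, (hb₂ a h).2⟩
    rw [List.length_append, hlen₁, hlen₂] at this
    exact this
end

section
/- Let u be a word over {1,...,n} and for i = 1,...,n let u_{1,i} denote the maximum length of a weakly increasing subsequence of u with entries in {1,...,i}. If u is the row reading word of a semistandard Young tableau T (reading rows left-to-right, from top row to bottom row, where rows weakly increase left to right and columns strictly increase bottom to top), then u_{1,i} equals the number of entries of the bottom row of T that are at most i. -/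
open List

lemma foldr_max_le_s5 (L : List ℕ) (N : ℕ) (h : ∀ m ∈ L, m ≤ N) : L.foldr max 0 ≤ N := by
  induction L with
  | nil => simp
  | cons a t ih =>
    simp only [List.foldr_cons]
    exact max_le (h a (by simp)) (ih fun m hm => h m (by simp [hm]))

lemma le_foldr_max (L : List ℕ) (m : ℕ) (h : m ∈ L) : m ≤ L.foldr max 0 := by
  induction L with
  | nil => simp at h
  | cons a t ih =>
    rcases List.mem_cons.mp h with rfl | h
    · exact le_max_left _ _
    · exact le_trans (ih h) (le_max_right _ _)

lemma count_split (x i : ℕ) (hxi : x ≤ i) (l : List ℕ) :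
    (l.filter (fun a => decide (a < x))).length +
      (l.filter (fun a => decide (x ≤ a ∧ a ≤ i))).length ≤
      (l.filter (fun a => decide (a ≤ i))).length := by
  induction l with
  | nil => simp
  | cons a t ih =>
    rcases Nat.lt_or_ge a x with h1 | h1
    · rw [List.filter_cons_of_pos (by simp [h1]),
        List.filter_cons_of_neg (by simp only [decide_eq_true_eq]; omega),
        List.filter_cons_of_pos (by simp only [decide_eq_true_eq]; omega)]
      simp only [List.length_cons]
      omega
    · by_cases h2 : a ≤ i
      · rw [List.filter_cons_of_neg (by simp only [decide_eq_true_eq]; omega),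
          List.filter_cons_of_pos (by simp only [decide_eq_true_eq]; exact ⟨h1, h2⟩),
          List.filter_cons_of_pos (by simp [h2])]
        simp only [List.length_cons]
        omega
      · rw [List.filter_cons_of_neg (by simp only [decide_eq_true_eq]; omega),
          List.filter_cons_of_neg (by simp only [decide_eq_true_eq]; tauto),
          List.filter_cons_of_neg (by simp [h2])]
        omega

lemma col_ineq : ∀ (R1 R : List ℕ), R1.Pairwise (· ≤ ·) → R1.length ≤ R.length →
    (∀ j < R1.length, R.getD j 0 < R1.getD j 0) → ∀ (x : ℕ),
    (R1.filter (fun a => decide (a ≤ x))).length ≤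
      (R.filter (fun a => decide (a < x))).length := by
  intro R1
  induction R1 with
  | nil => intro R _ _ _ x; simp
  | cons b R1' ih =>
    intro R hsort hlen hcol x
    cases R with
    | nil => simp at hlen
    | cons a R' =>
      have hab : a < b := by simpa using hcol 0 (by simp)
      by_cases hbx : b ≤ x
      · have hax : a < x := lt_of_lt_of_le hab hbx
        rw [List.filter_cons_of_pos (p := fun a => decide (a ≤ x)) (by simp [hbx]),
          List.filter_cons_of_pos (p := fun a => decide (a < x)) (by simp [hax])]
        simp only [List.length_cons, Nat.succ_le_succ_iff]
        have := ih R' hsort.of_cons (by simpa using hlen)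
          (fun j hj => by simpa using hcol (j+1) (by simpa using hj)) x
        omega
      · have hnil : (b :: R1').filter (fun a => decide (a ≤ x)) = [] := by
          rw [List.filter_eq_nil_iff]
          intro c hc
          rcases List.mem_cons.mp hc with rfl | hc
          · simpa using hbx
          · have : b ≤ c := (List.pairwise_cons.mp hsort).1 c hc
            simp only [decide_eq_true_eq]
            omega
        simp [hnil]

lemma key : ∀ (rows : List (List ℕ)),
    (∀ r ∈ rows, r.Pairwise (· ≤ ·)) →
    List.Chain' (fun a b => b ≤ a) (rows.map List.length) →
    (∀ i j : ℕ, j < (rows.getD (i + 1) []).length →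
      (rows.getD i []).getD j 0 < (rows.getD (i + 1) []).getD j 0) →
    ∀ (i : ℕ) (s : List ℕ), s <+ rows.reverse.flatten → s.Pairwise (· ≤ ·) →
      (∀ a ∈ s, a ≤ i) →
      s.length ≤ ((rows.getD 0 []).filter (fun a => decide (a ≤ i))).length := by
  intro rows
  induction rows with
  | nil =>
    intro _ _ _ i s hs _ _
    simp only [List.reverse_nil, List.flatten_nil] at hs
    simp [List.sublist_nil.mp hs]
  | cons R rest ih =>
    intro hsort hlen hcol i s hs hss hsb
    have hw : (R :: rest).reverse.flatten = rest.reverse.flatten ++ R := by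
      simp
    rw [hw] at hs
    obtain ⟨s1, s2, rfl, hs1, hs2⟩ := List.sublist_append_iff.mp hs
    rcases s1.eq_nil_or_concat with rfl | ⟨t, x, rfl⟩
    · -- s = s2 entirely in R
      simp only [List.nil_append] at hss hsb ⊢
      have : s2 <+ R.filter (fun a => decide (a ≤ i)) := by
        have h1 : s2.filter (fun a => decide (a ≤ i)) <+ R.filter (fun a => decide (a ≤ i)) :=
          hs2.filter _
        rwa [List.filter_eq_self.mpr (fun a ha => by simpa using hsb a ha)] at h1
      simpa using this.length_le
    · -- s1 = t ++ [x]
      simp only [List.concat_eq_append] at hs1 hss hsb ⊢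
      -- sortedness facts
      have hpw := hss
      rw [List.pairwise_append] at hpw
      obtain ⟨hpw1, hpw2, hcross⟩ := hpw
      have htx : ∀ a ∈ t ++ [x], a ≤ x := by
        intro a ha
        rcases List.mem_append.mp ha with ha | ha
        · rw [List.pairwise_append] at hpw1
          exact hpw1.2.2 a ha x (by simp)
        · simp at ha; omega
      have hxi : x ≤ i := hsb x (by simp)
      -- IH on rest
      have hsort' : ∀ r ∈ rest, r.Pairwise (· ≤ ·) := fun r hr => hsort r (by simp [hr])
      have hlen' : List.Chain' (fun a b => b ≤ a) (rest.map List.length) := by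
        exact hlen.tail
      have hcol' : ∀ i j : ℕ, j < (rest.getD (i + 1) []).length →
          (rest.getD i []).getD j 0 < (rest.getD (i + 1) []).getD j 0 := by
        intro i j hj
        have := hcol (i + 1) j (by simpa using hj)
        simpa using this
      have h1 := ih hsort' hlen' hcol' x (t ++ [x]) hs1 hpw1 htx
      -- column inequality with bottom row R
      have hR1sorted : (rest.getD 0 []).Pairwise (· ≤ ·) := by
        cases rest with
        | nil => simp
        | cons r rest' => exact hsort r (by simp)
      have hR1len : (rest.getD 0 []).length ≤ R.length := by
        cases rest with
        | nil => simp
        | cons r rest' =>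
          simp only [List.map_cons, List.Chain', List.isChain_cons_cons] at hlen
          simpa using hlen.1
      have hR1col : ∀ j < (rest.getD 0 []).length,
          R.getD j 0 < (rest.getD 0 []).getD j 0 := by
        intro j hj
        have := hcol 0 j (by simpa using hj)
        simpa using this
      have h2 := col_ineq (rest.getD 0 []) R hR1sorted hR1len hR1col x
      -- s2 bound
      have hs2b : ∀ a ∈ s2, x ≤ a ∧ a ≤ i := by
        intro a ha
        exact ⟨hcross x (by simp) a ha, hsb a (by simp [ha])⟩
      have h3 : s2.length ≤ (R.filter (fun a => decide (x ≤ a ∧ a ≤ i))).length := by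
        have hsub : s2 <+ R.filter (fun a => decide (x ≤ a ∧ a ≤ i)) := by
          have h1 : s2.filter (fun a => decide (x ≤ a ∧ a ≤ i)) <+
              R.filter (fun a => decide (x ≤ a ∧ a ≤ i)) := hs2.filter _
          rwa [List.filter_eq_self.mpr (fun a ha => by simpa using hs2b a ha)] at h1
        exact hsub.length_le
      have h4 := count_split x i hxi R
      simp only [List.getD_cons_zero] at h2 ⊢
      have hlenA : (t ++ [x]).length = t.length + 1 := by simp
      have hlenB : (t ++ [x] ++ s2).length = t.length + 1 + s2.length := by
        simp; omega
      omega

theorem stmt5 (n : ℕ) (rows : List (List ℕ))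
    -- rows of the tableau, listed from bottom to top; each row is nonempty,
    -- weakly increasing, with entries in {1, ..., n}
    (hrows : ∀ r ∈ rows, r ≠ [] ∧ r.Pairwise (· ≤ ·) ∧ ∀ a ∈ r, 1 ≤ a ∧ a ≤ n)
    -- row lengths weakly decrease from bottom to top
    (hlen : List.Chain' (fun a b => b ≤ a) (rows.map List.length))
    -- columns strictly increase from bottom to top
    (hcol : ∀ i j : ℕ, j < (rows.getD (i + 1) []).length →
      (rows.getD i []).getD j 0 < (rows.getD (i + 1) []).getD j 0)
    (i : ℕ) (hi1 : 1 ≤ i) (hin : i ≤ n) :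
    wis (rows.reverse.flatten) 1 i =
      ((rows.getD 0 []).filter (fun a => decide (a ≤ i))).length := by
  set w := rows.reverse.flatten with hw
  set R0 := rows.getD 0 [] with hR0
  set s0 := R0.filter (fun a => decide (a ≤ i)) with hs0
  apply Nat.le_antisymm
  · -- upper bound
    apply foldr_max_le_s5
    intro m hm
    obtain ⟨s, hmem, rfl⟩ := List.mem_map.mp hm
    rw [List.mem_filter] at hmem
    obtain ⟨hsub, hprop⟩ := hmem
    rw [decide_eq_true_eq] at hprop
    exact key rows (fun r hr => (hrows r hr).2.1) hlen hcol i s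
      (List.mem_sublists.mp hsub) hprop.1 (fun a ha => (hprop.2 a ha).2)
  · -- lower bound: s0 is a witness
    have hs0w : s0 <+ w := by
      cases rows with
      | nil => simp [hw, hR0, hs0]
      | cons R rest =>
        have h1 : s0 <+ R := by
          simp only [hs0, hR0, List.getD_cons_zero]
          exact List.filter_sublist (l := R)
        have h2 : R <+ (R :: rest).reverse.flatten := by
          have : (R :: rest).reverse.flatten = rest.reverse.flatten ++ R := by simp
          rw [this]
          exact List.sublist_append_right _ _
        exact h1.trans h2
    have hs0sorted : s0.Pairwise (· ≤ ·) := by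
      cases rows with
      | nil => simp [hR0, hs0]
      | cons R rest =>
        have : R.Pairwise (· ≤ ·) := (hrows R (by simp)).2.1
        exact this.filter _
    have hs0b : ∀ a ∈ s0, 1 ≤ a ∧ a ≤ i := by
      intro a ha
      rw [hs0, List.mem_filter, decide_eq_true_eq] at ha
      refine ⟨?_, ha.2⟩
      cases rows with
      | nil => simp [hR0] at ha
      | cons R rest =>
        have := (hrows R (by simp)).2.2 a (by simpa [hR0] using ha.1)
        exact this.1
    apply le_foldr_max
    rw [List.mem_map]
    refine ⟨s0, ?_, rfl⟩
    rw [List.mem_filter, decide_eq_true_eq]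
    exact ⟨List.mem_sublists.mpr hs0w, hs0sorted, hs0b⟩
end

section
/- Let u, v be words over {1,...,n} of the same length and with the same content. If std(u) ≡_gram std(v) (as words over {1,...,k} where k = |u|), then u ≡_gram v, where for words over {1,...,m}, x ≡_gram y means that for all 1 ≤ p ≤ q ≤ m the maximum lengths of weakly increasing subsequences with entries in [p,q] agree in x and y. -/
/-- The standardisation of a word: the j-th occurrence (left to right) of a letter c
is replaced by j plus the number of letters strictly smaller than c. -/
def stdWord (u : List ℕ) : List ℕ :=
  (List.range u.length).map
    (fun i => (u.take (i + 1)).count (u.getD i 0) + u.countP (fun a => decide (a < u.getD i 0)))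

namespace StdAux

lemma foldr_max_le {L : List ℕ} {k : ℕ} (h : ∀ x ∈ L, x ≤ k) : L.foldr max 0 ≤ k := by
  induction L with
  | nil => simp
  | cons a l ih =>
    simp only [List.foldr_cons]
    exact max_le (h a (by simp)) (ih fun x hx => h x (List.mem_cons_of_mem _ hx))

lemma le_foldr_max {L : List ℕ} {x : ℕ} (h : x ∈ L) : x ≤ L.foldr max 0 := by
  induction L with
  | nil => simp at h
  | cons a l ih =>
    simp only [List.foldr_cons]
    rcases List.mem_cons.mp h with rfl | h'
    · exact le_max_left _ _
    · exact le_trans (ih h') (le_max_right _ _)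

lemma le_wis {w s : List ℕ} {p q : ℕ} (hs : s.Sublist w) (h1 : s.Pairwise (· ≤ ·))
    (h2 : ∀ a ∈ s, p ≤ a ∧ a ≤ q) : s.length ≤ wis w p q := by
  unfold wis
  apply le_foldr_max
  apply List.mem_map_of_mem
  refine List.mem_filter.mpr ⟨List.mem_sublists.mpr hs, ?_⟩
  simp only [decide_eq_true_eq]
  exact ⟨h1, h2⟩

lemma wis_le {w : List ℕ} {p q k : ℕ}
    (h : ∀ s : List ℕ, s.Sublist w → s.Pairwise (· ≤ ·) → (∀ a ∈ s, p ≤ a ∧ a ≤ q) →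
      s.length ≤ k) : wis w p q ≤ k := by
  unfold wis
  apply foldr_max_le
  intro x hx
  obtain ⟨s, hs, rfl⟩ := List.mem_map.mp hx
  obtain ⟨hsub, hpred⟩ := List.mem_filter.mp hs
  simp only [decide_eq_true_eq] at hpred
  exact h s (List.mem_sublists.mp hsub) hpred.1 hpred.2

lemma wis_eq_zero {w : List ℕ} {p q : ℕ} (h : q < p) : wis w p q = 0 := by
  refine Nat.le_zero.mp (wis_le fun s _ _ hr => ?_)
  cases s with
  | nil => simp
  | cons a l => have := hr a List.mem_cons_self; omega

/-- General transfer lemma: `wis w p q ≤ wis w' p' q'` whenever `w'` has the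
same length as `w`, is "monotone-compatible" with `w`, and sends in-range
letters to in-range letters. -/
lemma wis_le_of_map {w w' : List ℕ} (hlen : w.length = w'.length) {p q p' q' : ℕ}
    (hmono : ∀ i j, i < j → j < w.length → w.getD i 0 ≤ w.getD j 0 →
      w'.getD i 0 ≤ w'.getD j 0)
    (hrange : ∀ i, i < w.length → p ≤ w.getD i 0 → w.getD i 0 ≤ q →
      p' ≤ w'.getD i 0 ∧ w'.getD i 0 ≤ q') :
    wis w p q ≤ wis w' p' q' := by
  apply wis_le
  intro s hs hsort hr
  obtain ⟨f, hf⟩ := List.sublist_iff_exists_orderEmbedding_getElem?_eq.mp hs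
  -- for indices inside s, f lands inside w and values correspond
  have hin : ∀ ix, ix < s.length → f ix < w.length ∧ w.getD (f ix) 0 = s.getD ix 0 := by
    intro ix hix
    have h1 : s[ix]? = some (s.getD ix 0) := by
      rw [List.getD_eq_getElem _ _ hix, List.getElem?_eq_getElem hix]
    have h2 := (hf ix).symm.trans h1
    rw [List.getElem?_eq_some_iff] at h2
    obtain ⟨hw, hval⟩ := h2
    refine ⟨hw, ?_⟩
    rw [List.getD_eq_getElem _ _ hw]
    simpa using hval
  set t : List ℕ := (List.range s.length).map (fun ix => w'.getD (f ix) 0) with ht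
  have htlen : t.length = s.length := by simp [ht]
  have htsub : t.Sublist w' := by
    apply List.sublist_of_orderEmbedding_getElem?_eq f
    intro ix
    by_cases hix : ix < s.length
    · have h1 : t[ix]? = some (w'.getD (f ix) 0) := by
        rw [List.getElem?_eq_getElem (by omega : ix < t.length)]
        simp [ht]
      obtain ⟨hw, _⟩ := hin ix hix
      have hw' : f ix < w'.length := hlen ▸ hw
      rw [h1, List.getElem?_eq_getElem hw',
        List.getD_eq_getElem _ _ hw']
    · have h1 : t[ix]? = none := List.getElem?_eq_none_iff.mpr (by omega)
      have h2 : s[ix]? = none := List.getElem?_eq_none_iff.mpr (by omega)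
      have h3 := (hf ix).symm.trans h2
      rw [List.getElem?_eq_none_iff] at h3
      rw [h1]
      exact (List.getElem?_eq_none_iff.mpr (by omega)).symm
  have htsort : t.Pairwise (· ≤ ·) := by
    rw [ht, List.pairwise_map]
    refine List.Pairwise.imp_of_mem ?_ (List.pairwise_lt_range (n := s.length))
    intro a b ha hb hab
    rw [List.mem_range] at ha hb
    have hsab : s.getD a 0 ≤ s.getD b 0 := by
      have := List.pairwise_iff_getElem.mp hsort a b (by omega) (by omega) hab
      rwa [List.getD_eq_getElem _ _ ha, List.getD_eq_getElem _ _ hb]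
    obtain ⟨hwa, hva⟩ := hin a ha
    obtain ⟨hwb, hvb⟩ := hin b hb
    exact hmono (f a) (f b) (f.lt_iff_lt.mpr hab) hwb (by rw [hva, hvb]; exact hsab)
  have htr : ∀ a ∈ t, p' ≤ a ∧ a ≤ q' := by
    intro a hat
    rw [ht, List.mem_map] at hat
    obtain ⟨ix, hix, rfl⟩ := hat
    rw [List.mem_range] at hix
    obtain ⟨hw, hv⟩ := hin ix hix
    have hmem : s.getD ix 0 ∈ s := by
      rw [List.getD_eq_getElem _ _ hix]; exact List.getElem_mem _
    obtain ⟨h1, h2⟩ := hr _ hmem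
    exact hrange (f ix) hw (hv ▸ h1) (hv ▸ h2)
  calc s.length = t.length := htlen.symm
    _ ≤ wis w' p' q' := le_wis htsub htsort htr

lemma stdWord_length (w : List ℕ) : (stdWord w).length = w.length := by simp [stdWord]

lemma stdWord_getD {w : List ℕ} {i : ℕ} (h : i < w.length) :
    (stdWord w).getD i 0 =
      (w.take (i + 1)).count (w.getD i 0) + w.countP (fun a => decide (a < w.getD i 0)) := by
  rw [List.getD_eq_getElem _ _ (by rw [stdWord_length]; exact h)]
  simp [stdWord]

lemma countP_le_split (w : List ℕ) (c : ℕ) :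
    w.countP (fun a => decide (a ≤ c)) = w.countP (fun a => decide (a < c)) + w.count c := by
  induction w with
  | nil => simp
  | cons a l ih =>
    simp only [List.countP_cons, List.count_cons, ih]
    by_cases h1 : a ≤ c <;> by_cases h2 : a < c <;> by_cases h3 : a = c <;>
      simp [h1, h2, h3] <;> omega

lemma countP_lt_mono {w : List ℕ} {a b : ℕ} (hab : a ≤ b) :
    w.countP (fun x => decide (x < a)) ≤ w.countP (fun x => decide (x < b)) := by
  apply List.countP_mono_left
  intro x _
  simp only [decide_eq_true_eq]
  omega

lemma countP_le_mono {w : List ℕ} {a b : ℕ} (hab : a ≤ b) :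
    w.countP (fun x => decide (x ≤ a)) ≤ w.countP (fun x => decide (x ≤ b)) := by
  apply List.countP_mono_left
  intro x _
  simp only [decide_eq_true_eq]
  omega

lemma countP_le_lt {w : List ℕ} {a b : ℕ} (hab : a < b) :
    w.countP (fun x => decide (x ≤ a)) ≤ w.countP (fun x => decide (x < b)) := by
  apply List.countP_mono_left
  intro x _
  simp only [decide_eq_true_eq]
  omega

lemma std_lb {w : List ℕ} {i : ℕ} (h : i < w.length) :
    w.countP (fun a => decide (a < w.getD i 0)) + 1 ≤ (stdWord w).getD i 0 := by
  rw [stdWord_getD h]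
  have hmem : w.getD i 0 ∈ w.take (i + 1) := by
    rw [List.getD_eq_getElem _ _ h]
    have : (w.take (i + 1))[i]'(by simp; omega) = w[i] := List.getElem_take
    rw [← this]
    exact List.getElem_mem _
  have := List.count_pos_iff.mpr hmem
  omega

lemma std_ub {w : List ℕ} {i : ℕ} (h : i < w.length) :
    (stdWord w).getD i 0 ≤ w.countP (fun a => decide (a ≤ w.getD i 0)) := by
  rw [stdWord_getD h, countP_le_split]
  have := (List.take_sublist (i + 1) w).count_le (w.getD i 0)
  omega

/-- Strictly smaller letters get strictly smaller standardised values,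
irrespective of position. -/
lemma std_lt_of_lt {w : List ℕ} {i j : ℕ} (hi : i < w.length) (hj : j < w.length)
    (hv : w.getD i 0 < w.getD j 0) : (stdWord w).getD i 0 < (stdWord w).getD j 0 := by
  have h1 := std_ub hi
  have h2 := std_lb hj
  have h3 := countP_le_lt (w := w) hv
  omega

/-- Equal letters: earlier occurrences get smaller standardised values. -/
lemma std_lt_of_eq {w : List ℕ} {i j : ℕ} (hij : i < j) (hj : j < w.length)
    (hv : w.getD i 0 = w.getD j 0) : (stdWord w).getD i 0 < (stdWord w).getD j 0 := by
  have hi : i < w.length := lt_trans hij hj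
  rw [stdWord_getD hi, stdWord_getD hj, hv]
  have key : (w.take (i + 1)).count (w.getD j 0) < (w.take (j + 1)).count (w.getD j 0) := by
    have h1 : w.take (j + 1) = w.take j ++ [w.getD j 0] := by
      rw [List.take_succ, List.getElem?_eq_getElem hj, List.getD_eq_getElem _ _ hj]
      rfl
    have h2 : (w.take (i + 1)).count (w.getD j 0) ≤ (w.take j).count (w.getD j 0) := by
      have : w.take (i + 1) = (w.take j).take (i + 1) := by
        rw [List.take_take, min_eq_left (by omega)]
      rw [this]
      exact (List.take_sublist _ _).count_le _
    rw [h1, List.count_append]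
    simp only [List.count_singleton, beq_self_eq_true, if_true]
    omega
  omega

lemma std_lt_of_le {w : List ℕ} {i j : ℕ} (hij : i < j) (hj : j < w.length)
    (hv : w.getD i 0 ≤ w.getD j 0) : (stdWord w).getD i 0 < (stdWord w).getD j 0 := by
  rcases eq_or_lt_of_le hv with h | h
  · exact std_lt_of_eq hij hj h
  · exact std_lt_of_lt (lt_trans hij hj) hj h

/-- The main bridge: `wis` of a word equals `wis` of its standardisation on the
corresponding interval. -/
lemma wis_std (w : List ℕ) (p q : ℕ) :
    wis w p q = wis (stdWord w) (w.countP (fun a => decide (a < p)) + 1)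
      (w.countP (fun a => decide (a ≤ q))) := by
  apply le_antisymm
  · apply wis_le_of_map (stdWord_length w).symm
    · intro i j hij hj hv
      exact le_of_lt (std_lt_of_le hij hj hv)
    · intro i hi h1 h2
      constructor
      · have := std_lb hi
        have := countP_lt_mono (w := w) h1
        omega
      · have := std_ub hi
        have := countP_le_mono (w := w) h2
        omega
  · apply wis_le_of_map (stdWord_length w)
    · intro i j hij hj hv
      rw [stdWord_length] at hj
      by_contra hcon
      push_neg at hcon
      have := std_lt_of_lt hj (lt_trans hij hj) hcon
      omega
    · intro i hi h1 h2
      rw [stdWord_length] at hi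
      constructor
      · by_contra hcon
        push_neg at hcon
        have ha := std_ub hi
        have hb := countP_le_lt (w := w) hcon
        omega
      · by_contra hcon
        push_neg at hcon
        have ha := std_lb hi
        have hb := countP_le_lt (w := w) hcon
        omega

end StdAux

theorem stmt11 (n : ℕ) (u v : List ℕ)
    (hu : ∀ a ∈ u, 1 ≤ a ∧ a ≤ n) (hv : ∀ a ∈ v, 1 ≤ a ∧ a ≤ n)
    (hlen : u.length = v.length)
    (hcont : ∀ a : ℕ, u.count a = v.count a)
    (hstd : ∀ p q : ℕ, 1 ≤ p → p ≤ q → q ≤ u.length →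
      wis (stdWord u) p q = wis (stdWord v) p q) :
    ∀ p q : ℕ, 1 ≤ p → p ≤ q → q ≤ n → wis u p q = wis v p q := by
  intro p q hp hpq hq
  have hperm : u.Perm v := List.perm_iff_count.mpr (by simpa using hcont)
  have hcP : v.countP (fun a => decide (a < p)) = u.countP (fun a => decide (a < p)) :=
    (hperm.countP_eq _).symm
  have hcQ : v.countP (fun a => decide (a ≤ q)) = u.countP (fun a => decide (a ≤ q)) :=
    (hperm.countP_eq _).symm
  rw [StdAux.wis_std u p q, StdAux.wis_std v p q, hcP, hcQ]
  set P := u.countP (fun a => decide (a < p)) + 1 with hP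
  set Q := u.countP (fun a => decide (a ≤ q)) with hQ
  by_cases hPQ : P ≤ Q
  · exact hstd P Q (by omega) hPQ (le_trans (by rw [hQ]; exact List.countP_le_length) le_rfl)
  · rw [StdAux.wis_eq_zero (by omega), StdAux.wis_eq_zero (by omega)]
end
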